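/- For fixed ρ₁ ∈ (0,1) and fixed L > 0, the map ρ₂ ↦ d_KL(ρ₁,ρ₂|L) on [0,1) is strictly decreasing on [0,ρ₁] and strictly increasing on [ρ₁,1), and tends to +∞ as ρ₂ → 1⁻. -/

import Mathlib

noncomputable def dKL (L r1 r2 : ℝ) : ℝ :=
  L * ((1 - r1 * r2) * (2 - r1 ^ 2 - r2 ^ 2) / ((1 - r1 ^ 2) * (1 - r2 ^ 2)) - 2)

lemma dKL_eq (L a x : ℝ) (ha : 1 - a^2 ≠ 0) (hx : 1 - x^2 ≠ 0) :
    dKL L a x = (L / (1 - a^2)) * ((a - x)^2 * (1 + a*x) / (1 - x^2)) := by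
  unfold dKL
  rw [div_sub' (mul_ne_zero ha hx),
    show (1 - a*x)*(2 - a^2 - x^2) - (1-a^2)*(1-x^2)*2 = (a-x)^2*(1+a*x) from by ring]
  field_simp

lemma anti_key (a x y : ℝ) (ha : 0 < a) (ha1 : a < 1) (hx : 0 ≤ x) (hxy : x < y) (hy : y ≤ a) :
    (a-y)^2*(1+a*y)*(1-x^2) < (a-x)^2*(1+a*x)*(1-y^2) := by
  have key : (a-x)^2*(1+a*x)*(1-y^2) - (a-y)^2*(1+a*y)*(1-x^2)
      = (y-x)*((1-a^2)*(1-a*x)*(a-y) + a*(1-x^2)*(a^2-y^2) + (1-a^2)*(1+a*x)*(a-x)) := by ring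
  have hxa : x < a := lt_of_lt_of_le hxy hy
  nlinarith [key, mul_pos (sub_pos.2 hxy)
    (add_pos_of_nonneg_of_pos (add_nonneg
      (mul_nonneg (mul_nonneg (by nlinarith : (0:ℝ) ≤ 1-a^2) (by nlinarith : (0:ℝ) ≤ 1-a*x)) (by linarith : (0:ℝ) ≤ a-y))
      (mul_nonneg (mul_nonneg ha.le (by nlinarith : (0:ℝ) ≤ 1-x^2)) (by nlinarith : (0:ℝ) ≤ a^2-y^2)))
      (mul_pos (mul_pos (by nlinarith : (0:ℝ) < 1-a^2) (by nlinarith : (0:ℝ) < 1+a*x)) (by linarith : (0:ℝ) < a-x)))]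

lemma mono_key (a x y : ℝ) (ha : 0 < a) (ha1 : a < 1) (hx : a ≤ x) (hxy : x < y) (hy : y < 1) :
    (a-x)^2*(1+a*x)*(1-y^2) < (a-y)^2*(1+a*y)*(1-x^2) := by
  have hx0 : 0 < x := lt_of_lt_of_le ha hx
  have hs : (0:ℝ) < x+y-2*a := by linarith
  have h1 : (a-x)^2 < (a-y)^2 := by nlinarith [mul_pos (sub_pos.2 hxy) hs]
  have h2 : (1+a*x)*(1-y^2) < (1+a*y)*(1-x^2) := by
    nlinarith [mul_pos ha (sub_pos.2 hxy), mul_pos (mul_pos hx0 (lt_trans hx0 hxy)) (mul_pos ha (sub_pos.2 hxy))]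
  have h3 : (0:ℝ) < (1+a*x)*(1-y^2) := mul_pos (by nlinarith) (by nlinarith)
  calc (a-x)^2*(1+a*x)*(1-y^2) = (a-x)^2*((1+a*x)*(1-y^2)) := by ring
    _ < (a-y)^2*((1+a*y)*(1-x^2)) := mul_lt_mul'' h1 h2 (sq_nonneg _) h3.le
    _ = (a-y)^2*(1+a*y)*(1-x^2) := by ring

theorem stmt_10 (L r1 : ℝ) (hL : 0 < L) (h1 : r1 ∈ Set.Ioo (0 : ℝ) 1) :
    StrictAntiOn (fun r2 => dKL L r1 r2) (Set.Icc 0 r1) ∧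
      StrictMonoOn (fun r2 => dKL L r1 r2) (Set.Ico r1 1) ∧
      Filter.Tendsto (fun r2 => dKL L r1 r2) (nhdsWithin 1 (Set.Iio 1)) Filter.atTop := by
  obtain ⟨ha0, ha1⟩ := h1
  have ha2 : (0:ℝ) < 1 - r1^2 := by nlinarith
  have hLa : 0 < L / (1 - r1^2) := div_pos hL ha2
  have heq : ∀ x : ℝ, -1 < x → x < 1 →
      dKL L r1 x = (L / (1 - r1^2)) * ((r1 - x)^2 * (1 + r1*x) / (1 - x^2)) := by
    intro x hxm hx1
    exact dKL_eq L r1 x (by nlinarith) (by nlinarith)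
  refine ⟨?_, ?_, ?_⟩
  · intro x hx y hy hxy
    obtain ⟨hx0, hxa⟩ := hx
    obtain ⟨hy0, hya⟩ := hy
    simp only
    rw [heq x (by linarith) (by linarith), heq y (by linarith) (by linarith)]
    apply mul_lt_mul_of_pos_left _ hLa
    rw [div_lt_div_iff₀ (by nlinarith) (by nlinarith)]
    exact anti_key r1 x y ha0 ha1 hx0 hxy hya
  · intro x hx y hy hxy
    obtain ⟨hxa, hx1⟩ := hx
    obtain ⟨hya, hy1⟩ := hy
    simp only
    rw [heq x (by linarith) hx1, heq y (by linarith) hy1]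
    apply mul_lt_mul_of_pos_left _ hLa
    rw [div_lt_div_iff₀ (by nlinarith) (by nlinarith)]
    exact mono_key r1 x y ha0 ha1 hxa hxy hy1
  · have hmem : ∀ᶠ x in nhdsWithin (1:ℝ) (Set.Iio 1), -1 < x ∧ x < 1 := by
      filter_upwards [eventually_nhdsWithin_of_eventually_nhds
        (eventually_gt_nhds (by norm_num : (-1:ℝ) < 1)), self_mem_nhdsWithin] with x h1 h2
      exact ⟨h1, h2⟩
    have hcongr : ∀ᶠ x in nhdsWithin (1:ℝ) (Set.Iio 1),
        (L / (1 - r1^2)) * ((r1 - x)^2 * (1 + r1*x)) * (1 - x^2)⁻¹ = dKL L r1 x := by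
      filter_upwards [hmem] with x ⟨hxm, hx1⟩
      rw [heq x hxm hx1]
      ring
    refine Filter.Tendsto.congr' hcongr ?_
    apply Filter.Tendsto.pos_mul_atTop
      (show (0:ℝ) < (L / (1 - r1^2)) * ((r1 - 1)^2 * (1 + r1*1)) by
        apply mul_pos hLa
        apply mul_pos (by nlinarith) (by nlinarith))
    · apply Filter.Tendsto.mono_left _ nhdsWithin_le_nhds
      exact (Continuous.tendsto (by continuity) 1)
    · apply Filter.Tendsto.inv_tendsto_nhdsGT_zero
      rw [tendsto_nhdsWithin_iff]
      constructor
      · have : Filter.Tendsto (fun x : ℝ => 1 - x^2) (nhds 1) (nhds (1 - 1^2)) :=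
          Continuous.tendsto (by continuity) 1
        simpa using this.mono_left nhdsWithin_le_nhds
      · filter_upwards [hmem] with x ⟨hxm, hx1⟩
        have : 0 < 1 - x^2 := by nlinarith
        exact this
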